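/- Let (X,d,μ) be an η-Ahlfors regular quasi-metric measure space with η > 0 and triangular constant κ ≥ 1, let ρ be the third order hypermetric induced by d, and let 0 < γ < 2η. Then for every pair f, g of nonnegative measurable functions on X and every x ∈ X, T^γ(f,g)(x) ≤ (2κ)^γ I_{η−γ/2}(f · I_{η−γ/2}g)(x). -/

import Mathlib

open MeasureTheory ENNReal

/-- The third order hypermetric induced by `d`:
`ρ(x,y,z) = inf_{u ∈ X} max {d(x,u), d(y,u), d(z,u)}`. -/
noncomputable def hyperRho {X : Type*} (d : X → X → ℝ) (x y z : X) : ℝ :=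
  ⨅ u : X, max (d x u) (max (d y u) (d z u))

/-- `d` is a quasi-metric on `X` with triangular constant `κ`. -/
def IsQuasiMetric {X : Type*} (d : X → X → ℝ) (κ : ℝ) : Prop :=
  (∀ x y, 0 ≤ d x y) ∧ (∀ x y, (d x y = 0 ↔ x = y)) ∧ (∀ x y, d x y = d y x) ∧
    (∀ x y z, d x z ≤ κ * (d x y + d y z))

/-- `(X,d,μ)` is `η`-Ahlfors regular with constants `a ≤ A`. -/
def IsAhlfors {X : Type*} [MeasurableSpace X] (d : X → X → ℝ) (μ : Measure X)
    (η a A : ℝ) : Prop :=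
  ∀ x : X, ∀ r : ℝ, 0 < r →
    ENNReal.ofReal (a * r ^ η) ≤ μ {y | d x y < r} ∧
      μ {y | d x y < r} ≤ ENNReal.ofReal (A * r ^ η)

/-- The bilinear fractional integral operator
`T^γ(f,g)(x) = ∬ f(y) g(z) ρ(x,y,z)^{-γ} dμ(y) dμ(z)`
(with the convention `0 ^ (-γ) = ∞` for `γ > 0`, as in `ENNReal.rpow`). -/
noncomputable def Tgamma {X : Type*} [MeasurableSpace X] (d : X → X → ℝ)
    (μ : Measure X) (γ : ℝ) (f g : X → ℝ≥0∞) (x : X) : ℝ≥0∞ :=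
  ∫⁻ y, ∫⁻ z, f y * g z * (ENNReal.ofReal (hyperRho d x y z)) ^ (-γ) ∂μ ∂μ

/-- The linear fractional integral operator of order `β` in the `η`-dimensional
space `(X,d,μ)`: `I_β h(x) = ∫ h(y) d(x,y)^{β-η} dμ(y)`. -/
noncomputable def fracInt {X : Type*} [MeasurableSpace X] (d : X → X → ℝ)
    (μ : Measure X) (β η : ℝ) (h : X → ℝ≥0∞) (x : X) : ℝ≥0∞ :=
  ∫⁻ y, h y * (ENNReal.ofReal (d x y)) ^ (β - η) ∂μ

/-- The `L^p(μ)` norm of a nonnegative function, `p` a real exponent. -/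
noncomputable def lpNorm {X : Type*} [MeasurableSpace X] (μ : Measure X) (p : ℝ)
    (h : X → ℝ≥0∞) : ℝ≥0∞ :=
  (∫⁻ x, (h x) ^ p ∂μ) ^ (1 / p)

/-- Pointwise bound `T^γ(f,g)(x) ≤ (2κ)^γ I_{η-γ/2}(f · I_{η-γ/2}g)(x)`. -/
theorem statement7 {X : Type*} [MeasurableSpace X]
    (d : X → X → ℝ) (κ : ℝ) (hκ : 1 ≤ κ) (hqm : IsQuasiMetric d κ)
    (hd_meas : Measurable fun p : X × X => d p.1 p.2)
    (μ : Measure X) (η : ℝ) (hη : 0 < η)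
    (a A : ℝ) (ha : 0 < a) (haA : a ≤ A) (hAhl : IsAhlfors d μ η a A)
    (γ : ℝ) (hγ0 : 0 < γ) (hγ2η : γ < 2 * η)
    (f g : X → ℝ≥0∞) (hf : Measurable f) (hg : Measurable g) (x : X) :
    Tgamma d μ γ f g x ≤
      ENNReal.ofReal ((2 * κ) ^ γ) *
        fracInt d μ (η - γ / 2) η
          (fun y => f y * fracInt d μ (η - γ / 2) η g y) x := by

  obtain ⟨hd0, hdeq, hdsymm, hdtri⟩ := hqm
  have hx2κ : (0:ℝ) < 2*κ := by linarith
  haveI : Nonempty X := ⟨x⟩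
  -- key pointwise inequality
  have key : ∀ y z : X, (ENNReal.ofReal (hyperRho d x y z)) ^ (-γ) ≤
      ENNReal.ofReal ((2*κ)^γ) *
        ((ENNReal.ofReal (d x y)) ^ (-(γ/2)) * (ENNReal.ofReal (d y z)) ^ (-(γ/2))) := by
    intro y z
    have hρ0 : 0 ≤ hyperRho d x y z :=
      Real.iInf_nonneg fun u => (hd0 x u).trans (le_max_left _ _)
    have hsq : Real.sqrt (d x y * d y z) ≤ 2*κ*hyperRho d x y z := by
      rw [← div_le_iff₀' hx2κ]
      refine le_ciInf fun u => ?_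
      rw [div_le_iff₀ hx2κ]
      set M := max (d x u) (max (d y u) (d z u)) with hM
      have hM0 : 0 ≤ M := (hd0 x u).trans (le_max_left _ _)
      have h1 : d x y ≤ 2*κ*M := by
        have := hdtri x u y
        have e1 : d x u ≤ M := le_max_left _ _
        have e2 : d u y ≤ M := by
          rw [hdsymm u y]; exact le_trans (le_max_left _ _) (le_max_right _ _)
        nlinarith
      have h2 : d y z ≤ 2*κ*M := by
        have := hdtri y u z
        have e1 : d y u ≤ M := le_trans (le_max_left _ _) (le_max_right _ _)
        have e2 : d u z ≤ M := by
          rw [hdsymm u z]; exact le_trans (le_max_right _ _) (le_max_right _ _)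
        nlinarith
      calc Real.sqrt (d x y * d y z) ≤ Real.sqrt ((2*κ*M)^2) := by
            apply Real.sqrt_le_sqrt
            nlinarith [hd0 x y, hd0 y z]
        _ = 2*κ*M := Real.sqrt_sq (by positivity)
        _ = M * (2*κ) := by ring
    have hpq : d x y * d y z ≤ (2*κ*hyperRho d x y z)^2 := by
      have h := Real.sq_sqrt (mul_nonneg (hd0 x y) (hd0 y z))
      nlinarith [Real.sqrt_nonneg (d x y * d y z)]
    set P := ENNReal.ofReal (d x y) with hP
    set Q := ENNReal.ofReal (d y z) with hQ
    set R := ENNReal.ofReal (hyperRho d x y z) with hR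
    set K := ENNReal.ofReal (2*κ) with hK
    have hKne : K ≠ 0 := by
      simp [hK, ENNReal.ofReal_eq_zero, not_le, hx2κ, show (0:ℝ) < κ by linarith]
    have hKt : K ≠ ⊤ := ENNReal.ofReal_ne_top
    have hK0 : K^γ ≠ 0 := by
      simp [ENNReal.rpow_eq_zero_iff, hKne, hKt]
    have hKγt : K^γ ≠ ⊤ := by
      simp [ENNReal.rpow_eq_top_iff, hKne, hKt]
    have hPQ : P * Q ≤ (K * R)^(2:ℕ) := by
      rw [hP, hQ, hK, hR, ← ENNReal.ofReal_mul (hd0 x y),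
        ← ENNReal.ofReal_mul (le_of_lt hx2κ), ← ENNReal.ofReal_pow (by positivity)]
      exact ENNReal.ofReal_le_ofReal hpq
    have h1 : (P*Q) ^ (γ/2) ≤ K^γ * R^γ := by
      calc (P*Q)^(γ/2) ≤ ((K*R)^(2:ℕ))^(γ/2) :=
            ENNReal.rpow_le_rpow hPQ (by positivity)
        _ = (K*R)^γ := by
            rw [← ENNReal.rpow_natCast (K*R) 2, ← ENNReal.rpow_mul]
            norm_num
            congr 1
            ring
        _ = K^γ * R^γ := ENNReal.mul_rpow_of_ne_top hKt ENNReal.ofReal_ne_top γ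
    have h2 : R^(-γ) ≤ K^γ * (P*Q)^(-(γ/2)) := by
      rw [ENNReal.rpow_neg, ENNReal.rpow_neg]
      calc (R^γ)⁻¹ = K^γ * ((K^γ)⁻¹ * (R^γ)⁻¹) := by
            rw [← mul_assoc, ENNReal.mul_inv_cancel hK0 hKγt, one_mul]
        _ = K^γ * (K^γ * R^γ)⁻¹ := by
            rw [ENNReal.mul_inv (Or.inl hK0) (Or.inl hKγt)]
        _ ≤ K^γ * ((P*Q)^(γ/2))⁻¹ := mul_le_mul_right (ENNReal.inv_le_inv.mpr h1) _
    have hKγ : ENNReal.ofReal ((2*κ)^γ) = K^γ := by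
      rw [hK, ENNReal.ofReal_rpow_of_pos hx2κ]
    rw [hKγ, ← ENNReal.mul_rpow_of_ne_top ENNReal.ofReal_ne_top ENNReal.ofReal_ne_top]
    exact h2
  have hexp : η - γ/2 - η = -(γ/2) := by ring
  have hBmeas : ∀ y : X, Measurable fun z => g z * (ENNReal.ofReal (d y z)) ^ (-(γ/2)) := by
    intro y
    have hdy : Measurable fun z => d y z :=
      hd_meas.comp (measurable_const.prodMk measurable_id)
    exact hg.mul ((ENNReal.measurable_ofReal.comp hdy).pow_const _)
  simp only [Tgamma, fracInt, hexp]
  set C := ENNReal.ofReal ((2*κ)^γ) with hC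
  calc ∫⁻ y, ∫⁻ z, f y * g z * (ENNReal.ofReal (hyperRho d x y z))^(-γ) ∂μ ∂μ
      ≤ ∫⁻ y, ∫⁻ z, (C * (f y * (ENNReal.ofReal (d x y))^(-(γ/2)))) *
          (g z * (ENNReal.ofReal (d y z))^(-(γ/2))) ∂μ ∂μ := by
        refine lintegral_mono fun y => lintegral_mono fun z => ?_
        calc f y * g z * (ENNReal.ofReal (hyperRho d x y z))^(-γ)
            ≤ f y * g z * (C * ((ENNReal.ofReal (d x y))^(-(γ/2)) *
                (ENNReal.ofReal (d y z))^(-(γ/2)))) := mul_le_mul_right (key y z) _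
          _ = (C * (f y * (ENNReal.ofReal (d x y))^(-(γ/2)))) *
                (g z * (ENNReal.ofReal (d y z))^(-(γ/2))) := by ring
    _ = ∫⁻ y, (C * (f y * (ENNReal.ofReal (d x y))^(-(γ/2)))) *
          ∫⁻ z, g z * (ENNReal.ofReal (d y z))^(-(γ/2)) ∂μ ∂μ := by
        exact lintegral_congr fun y => lintegral_const_mul _ (hBmeas y)
    _ = C * ∫⁻ y, f y * (∫⁻ z, g z * (ENNReal.ofReal (d y z))^(-(γ/2)) ∂μ) *
          (ENNReal.ofReal (d x y))^(-(γ/2)) ∂μ := by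
        rw [← lintegral_const_mul' C _ ENNReal.ofReal_ne_top]
        exact lintegral_congr fun y => by ring
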